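/- arXiv:2603.24483 — 5 statements merged into one kernel-verified Lean document; each statement's English description precedes it below -/
import Mathlib

section
/- Let E ⊂ ℝ² be a convex body and x ∈ ∂E. Suppose that near x, in coordinates where e is tangent to ∂E at x, the boundary ∂E − x is the graph {(x', u(x')) : |x'| ≤ ε_x} of a nonnegative convex function u with u(0)=0 over the tangent direction, within the rectangle {|x'| ≤ ε_x, t ≤ t_x}. Then for every 0 < ε ≤ min(ε_x, t_x), the circle ∂B_ε(x) intersects ∂E in exactly two points. -/
open MeasureTheory


open RealInnerProductSpace Filter Topology



private lemma sift_coord {e g : EuclideanSpace ℝ (Fin 2)} (he : ‖e‖ = 1)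
    (heg : (inner ℝ e g : ℝ) = 0) (a b : ℝ) :
    (inner ℝ (a • e + b • g) e : ℝ) = a := by
  rw [inner_add_left, real_inner_smul_left, real_inner_smul_left,
    real_inner_self_eq_norm_sq, he, real_inner_comm g e] at *
  rw [heg]
  ring

private lemma sift_decomp {e f : EuclideanSpace ℝ (Fin 2)} (he : ‖e‖ = 1) (hf : ‖f‖ = 1)
    (hef : (inner ℝ e f : ℝ) = 0) (v : EuclideanSpace ℝ (Fin 2)) :
    ∃ a b : ℝ, v = a • e + b • f := by
  have hfe : (inner ℝ f e : ℝ) = 0 := by rw [real_inner_comm]; exact hef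
  have hli : LinearIndependent ℝ ![e, f] := by
    rw [LinearIndependent.pair_iff]
    intro s t h
    have h1 : (inner ℝ (s • e + t • f) e : ℝ) = s := sift_coord he hef s t
    have h2 : (inner ℝ (t • f + s • e) f : ℝ) = t := sift_coord hf hfe t s
    rw [h] at h1
    rw [add_comm, h] at h2
    simp only [inner_zero_left] at h1 h2
    exact ⟨h1.symm, h2.symm⟩
  have hsp : Submodule.span ℝ (Set.range ![e, f]) = ⊤ :=
    hli.span_eq_top_of_card_eq_finrank (by simp [finrank_euclideanSpace_fin])
  have hrange : Set.range ![e, f] = {e, f} := by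
    ext y; simp [Fin.exists_fin_two]; tauto
  rw [hrange] at hsp
  have hv : v ∈ Submodule.span ℝ ({e, f} : Set (EuclideanSpace ℝ (Fin 2))) := by
    rw [hsp]; trivial
  obtain ⟨a, b, hab⟩ := Submodule.mem_span_pair.mp hv
  exact ⟨a, b, hab.symm⟩


private lemma sift_coords {e f : EuclideanSpace ℝ (Fin 2)} (he : ‖e‖ = 1) (hf : ‖f‖ = 1)
    (hef : (inner ℝ e f : ℝ) = 0) (z : EuclideanSpace ℝ (Fin 2)) (a b : ℝ) :
    (inner ℝ ((z + a • e + b • f) - z) e : ℝ) = a ∧ (inner ℝ ((z + a • e + b • f) - z) f : ℝ) = b := by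
  have hfe : (inner ℝ f e : ℝ) = 0 := by rw [real_inner_comm]; exact hef
  have hw : (z + a • e + b • f) - z = a • e + b • f := by abel
  have hw2 : a • e + b • f = b • f + a • e := by abel
  rw [hw]
  exact ⟨sift_coord he hef a b, by rw [hw2]; exact sift_coord hf hfe b a⟩

private lemma sift_inj {e f : EuclideanSpace ℝ (Fin 2)} (he : ‖e‖ = 1) (hf : ‖f‖ = 1)
    (hef : (inner ℝ e f : ℝ) = 0) {z : EuclideanSpace ℝ (Fin 2)} {a b a' b' : ℝ}
    (h : z + a • e + b • f = z + a' • e + b' • f) : a = a' ∧ b = b' := by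
  have h1 := sift_coords he hf hef z a b
  have h2 := sift_coords he hf hef z a' b'
  rw [h] at h1
  exact ⟨h1.1.symm.trans h2.1, h1.2.symm.trans h2.2⟩

private lemma sift_normsq {e f : EuclideanSpace ℝ (Fin 2)} (he : ‖e‖ = 1) (hf : ‖f‖ = 1)
    (hef : (inner ℝ e f : ℝ) = 0) (a b : ℝ) :
    ‖a • e + b • f‖ ^ 2 = a ^ 2 + b ^ 2 := by
  have hfe : (inner ℝ f e : ℝ) = 0 := by rw [real_inner_comm]; exact hef
  rw [← real_inner_self_eq_norm_sq]
  simp only [inner_add_left, inner_add_right, real_inner_smul_left, real_inner_smul_right,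
    real_inner_self_eq_norm_sq, he, hf, hef, hfe]
  rw [norm_smul, norm_smul, he, hf]
  simp [mul_pow, sq_abs]

private lemma sift_chord {εx : ℝ} {u : ℝ → ℝ} (hu : ConvexOn ℝ (Set.Icc (-εx) εx) u)
    (hu0 : u 0 = 0) (hεx : 0 < εx) :
    ∀ a b : ℝ, 0 ≤ a → a ≤ b → b ≤ εx → b * u a ≤ a * u b := by
  intro a b ha hab hb
  rcases eq_or_lt_of_le (ha.trans hab) with hb0 | hb0
  · have ha0 : a = 0 := le_antisymm (hab.trans hb0.symm.le) ha
    rw [ha0, ← hb0, hu0]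
  · have h0m : (0 : ℝ) ∈ Set.Icc (-εx) εx := by
      constructor <;> [linarith; linarith]
    have hbm : b ∈ Set.Icc (-εx) εx := by
      constructor <;> [linarith; linarith]
    have hθ : 0 ≤ a / b := div_nonneg ha hb0.le
    have hθ1 : a / b ≤ 1 := by
      rw [div_le_one hb0]; exact hab
    have := hu.2 h0m hbm (by linarith : (0:ℝ) ≤ 1 - a / b) hθ (by ring)
    simp only [smul_eq_mul, mul_zero, zero_add, hu0, mul_zero] at this
    have hab' : a / b * b = a := div_mul_cancel₀ a hb0.ne'
    rw [hab'] at this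
    have := mul_le_mul_of_nonneg_left this hb0.le
    calc b * u a ≤ b * (a / b * u b) := this
    _ = a * u b := by field_simp

private lemma sift_mono {εx : ℝ} {u : ℝ → ℝ} (hu : ConvexOn ℝ (Set.Icc (-εx) εx) u)
    (hu0 : u 0 = 0) (hεx : 0 < εx) (hunn : ∀ s ∈ Set.Icc (-εx) εx, 0 ≤ u s) :
    ∀ a b : ℝ, 0 ≤ a → a ≤ b → b ≤ εx → u a ≤ u b := by
  intro a b ha hab hb
  rcases eq_or_lt_of_le (ha.trans hab) with hb0 | hb0
  · have ha0 : a = 0 := le_antisymm (hab.trans hb0.symm.le) ha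
    rw [ha0, ← hb0]
  · have h := sift_chord hu hu0 hεx a b ha hab hb
    have hub : 0 ≤ u b := hunn b ⟨by linarith, hb⟩
    nlinarith

private lemma sift_flip_convex {εx : ℝ} {u : ℝ → ℝ} (hu : ConvexOn ℝ (Set.Icc (-εx) εx) u) :
    ConvexOn ℝ (Set.Icc (-εx) εx) (fun s => u (-s)) := by
  refine ⟨convex_Icc _ _, ?_⟩
  intro x hx y hy a b ha hb hab
  have hx' : -x ∈ Set.Icc (-εx) εx := ⟨by linarith [hx.2], by linarith [hx.1]⟩
  have hy' : -y ∈ Set.Icc (-εx) εx := ⟨by linarith [hy.2], by linarith [hy.1]⟩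
  have := hu.2 hx' hy' ha hb hab
  have hh : a • x + b • y = -(a • (-x) + b • (-y)) := by simp [smul_eq_mul]; ring
  rw [show (fun s => u (-s)) (a • x + b • y) = u (-(a • x + b • y)) from rfl, hh, neg_neg]
  exact this

set_option maxHeartbeats 1000000 in
private lemma sift_aux (E : Set (EuclideanSpace ℝ (Fin 2)))
    (z e f : EuclideanSpace ℝ (Fin 2)) (he : ‖e‖ = 1) (hf : ‖f‖ = 1)
    (hef : (inner ℝ e f : ℝ) = 0)
    (εx tx : ℝ) (hεx : 0 < εx) (htx : 0 < tx)
    (u : ℝ → ℝ) (hu : ConvexOn ℝ (Set.Icc (-εx) εx) u) (hu0 : u 0 = 0)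
    (hunn : ∀ s ∈ Set.Icc (-εx) εx, 0 ≤ u s)
    (hgraph : frontier E ∩ {p | ∃ s t : ℝ, |s| ≤ εx ∧ t ≤ tx ∧ p = z + s • e + t • f}
      = {p | ∃ s : ℝ, |s| ≤ εx ∧ p = z + s • e + u s • f})
    (ε : ℝ) (hε : 0 < ε) (hε1 : ε ≤ εx) (hε2 : ε ≤ tx) :
    ∃ s₀ : ℝ, 0 < s₀ ∧ s₀ ≤ ε ∧ s₀ ^ 2 + u s₀ ^ 2 = ε ^ 2 ∧
      ∀ s : ℝ, 0 < s → s ≤ εx → s ^ 2 + u s ^ 2 = ε ^ 2 → s = s₀ := by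
  -- closedness of the graph
  have hGclosed : IsClosed {p | ∃ s : ℝ, |s| ≤ εx ∧ p = z + s • e + u s • f} := by
    rw [← hgraph]
    apply isClosed_frontier.inter
    have hrect : {p : EuclideanSpace ℝ (Fin 2) | ∃ s t : ℝ, |s| ≤ εx ∧ t ≤ tx ∧ p = z + s • e + t • f}
        = {p | |(inner ℝ (p - z) e : ℝ)| ≤ εx} ∩ {p | (inner ℝ (p - z) f : ℝ) ≤ tx} := by
      ext p
      constructor
      · rintro ⟨s, t, hs, ht, rfl⟩
        obtain ⟨h1, h2⟩ := sift_coords he hf hef z s t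
        exact ⟨by rw [Set.mem_setOf_eq, h1]; exact hs, by rw [Set.mem_setOf_eq, h2]; exact ht⟩
      · rintro ⟨h1, h2⟩
        obtain ⟨a, b, hab⟩ := sift_decomp he hf hef (p - z)
        have hp : p = z + a • e + b • f := by
          rw [sub_eq_iff_eq_add'] at hab
          rw [hab]; abel
        obtain ⟨hc1, hc2⟩ := sift_coords he hf hef z a b
        rw [Set.mem_setOf_eq, hp, hc1] at h1
        rw [Set.mem_setOf_eq, hp, hc2] at h2
        exact ⟨a, b, h1, h2, hp⟩
    rw [hrect]
    have hc1 : Continuous fun p : EuclideanSpace ℝ (Fin 2) => (inner ℝ (p - z) e : ℝ) :=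
      (continuous_id.sub continuous_const).inner continuous_const
    have hc2 : Continuous fun p : EuclideanSpace ℝ (Fin 2) => (inner ℝ (p - z) f : ℝ) :=
      (continuous_id.sub continuous_const).inner continuous_const
    exact (isClosed_le (continuous_abs.comp hc1) continuous_const).inter
      (isClosed_le hc2 continuous_const)
  -- limit lemma from the closed graph
  have hlimit : ∀ (x : ℕ → ℝ) (s' L : ℝ), (∀ n, |x n| ≤ εx) →
      Tendsto x atTop (𝓝 s') → Tendsto (fun n => u (x n)) atTop (𝓝 L) → u s' = L := by
    intro x s' L hxb hxs hxL
    have hmem : ∀ n, z + x n • e + u (x n) • f ∈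
        {p | ∃ s : ℝ, |s| ≤ εx ∧ p = z + s • e + u s • f} := fun n => ⟨x n, hxb n, rfl⟩
    have htend : Tendsto (fun n => z + x n • e + u (x n) • f) atTop
        (𝓝 (z + s' • e + L • f)) :=
      (tendsto_const_nhds.add (hxs.smul_const e)).add (hxL.smul_const f)
    have hlim := hGclosed.mem_of_tendsto htend (Eventually.of_forall hmem)
    obtain ⟨s'', hs'', heq⟩ := hlim
    obtain ⟨h1, h2⟩ := sift_inj he hf hef heq
    rw [← h1] at h2
    exact h2.symm
  -- strict monotonicity of g on positive side
  have hgstrict : ∀ a b : ℝ, 0 ≤ a → a < b → b ≤ εx →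
      a ^ 2 + u a ^ 2 < b ^ 2 + u b ^ 2 := by
    intro a b ha hab hb
    have h1 := sift_mono hu hu0 hεx hunn a b ha hab.le hb
    have h2 : 0 ≤ u a := hunn a ⟨by linarith, by linarith⟩
    nlinarith
  -- the set K and its sup
  set K : Set ℝ := {s | s ∈ Set.Icc 0 ε ∧ s ^ 2 + u s ^ 2 ≤ ε ^ 2} with hK
  have hK0 : (0 : ℝ) ∈ K := ⟨⟨le_refl 0, hε.le⟩, by rw [hu0]; nlinarith⟩
  have hbdd : BddAbove K := ⟨ε, fun s hs => hs.1.2⟩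
  set s₀ : ℝ := sSup K with hs₀def
  have h0s₀ : 0 ≤ s₀ := le_csSup hbdd hK0
  have hs₀ε : s₀ ≤ ε := csSup_le ⟨0, hK0⟩ fun s hs => hs.1.2
  -- Claim A
  have claimA : s₀ ^ 2 + u s₀ ^ 2 ≤ ε ^ 2 := by
    obtain ⟨x, hxm, hxt, hxK⟩ := exists_seq_tendsto_sSup ⟨0, hK0⟩ hbdd
    have hx0 : ∀ n, 0 ≤ x n := fun n => (hxK n).1.1
    have hxε : ∀ n, x n ≤ ε := fun n => (hxK n).1.2
    have hux_mono : Monotone fun n => u (x n) := fun m n hmn =>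
      sift_mono hu hu0 hεx hunn _ _ (hx0 m) (hxm hmn) ((hxε n).trans hε1)
    have hux_bdd : BddAbove (Set.range fun n => u (x n)) := by
      refine ⟨ε, ?_⟩
      rintro y ⟨n, rfl⟩
      have h1 := (hxK n).2
      have h2 : 0 ≤ u (x n) := hunn (x n) ⟨by linarith [hx0 n], (hxε n).trans hε1⟩
      nlinarith [sq_nonneg (x n)]
    have hL := tendsto_atTop_ciSup hux_mono hux_bdd
    have huL : u s₀ = ⨆ n, u (x n) :=
      hlimit x s₀ _ (fun n => abs_le.mpr ⟨by linarith [hx0 n], (hxε n).trans hε1⟩) hxt hL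
    have htg : Tendsto (fun n => x n ^ 2 + u (x n) ^ 2) atTop
        (𝓝 (s₀ ^ 2 + (⨆ n, u (x n)) ^ 2)) := (hxt.pow 2).add (hL.pow 2)
    have := le_of_tendsto htg (Eventually.of_forall fun n => (hxK n).2)
    rw [huL]
    exact this
  -- Claim B
  have claimB : ε ^ 2 ≤ s₀ ^ 2 + u s₀ ^ 2 := by
    rcases eq_or_lt_of_le hs₀ε with heq | hlt
    · rw [heq]; nlinarith [sq_nonneg (u ε)]
    · obtain ⟨x, hxa, hxt, hxS⟩ := exists_seq_tendsto_sInf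
        (S := Set.Ioc s₀ ε) ⟨ε, hlt, le_refl ε⟩ ⟨s₀, fun y hy => hy.1.le⟩
      rw [csInf_Ioc hlt] at hxt
      have hx0 : ∀ n, 0 ≤ x n := fun n => h0s₀.trans (hxS n).1.le
      have hxε : ∀ n, x n ≤ ε := fun n => (hxS n).2
      have hnotK : ∀ n, ε ^ 2 ≤ x n ^ 2 + u (x n) ^ 2 := by
        intro n
        by_contra h
        push_neg at h
        have hmem : x n ∈ K := ⟨⟨hx0 n, hxε n⟩, h.le⟩
        exact absurd (le_csSup hbdd hmem) (not_le.mpr (hxS n).1)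
      have hux_anti : Antitone fun n => u (x n) := fun m n hmn =>
        sift_mono hu hu0 hεx hunn _ _ (hx0 n) (hxa hmn) ((hxε m).trans hε1)
      have hux_bdd : BddBelow (Set.range fun n => u (x n)) := by
        refine ⟨0, ?_⟩
        rintro y ⟨n, rfl⟩
        exact hunn (x n) ⟨by linarith [hx0 n], (hxε n).trans hε1⟩
      have hL := tendsto_atTop_ciInf hux_anti hux_bdd
      have huL : u s₀ = ⨅ n, u (x n) :=
        hlimit x s₀ _ (fun n => abs_le.mpr ⟨by linarith [hx0 n], (hxε n).trans hε1⟩) hxt hL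
      have htg : Tendsto (fun n => x n ^ 2 + u (x n) ^ 2) atTop
          (𝓝 (s₀ ^ 2 + (⨅ n, u (x n)) ^ 2)) := (hxt.pow 2).add (hL.pow 2)
      have := ge_of_tendsto htg (Eventually.of_forall hnotK)
      rw [huL]
      exact this
  have heqn : s₀ ^ 2 + u s₀ ^ 2 = ε ^ 2 := le_antisymm claimA claimB
  -- positivity of s₀
  have hM : 0 ≤ u ε := hunn ε ⟨by linarith, hε1⟩
  have hS2 : Real.sqrt (ε ^ 2 + u ε ^ 2) ^ 2 = ε ^ 2 + u ε ^ 2 := Real.sq_sqrt (by positivity)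
  have hSnn : 0 ≤ Real.sqrt (ε ^ 2 + u ε ^ 2) := Real.sqrt_nonneg _
  have hSε : ε ≤ Real.sqrt (ε ^ 2 + u ε ^ 2) := by nlinarith [sq_nonneg (u ε)]
  have hSpos : 0 < Real.sqrt (ε ^ 2 + u ε ^ 2) := lt_of_lt_of_le hε hSε
  set δ : ℝ := ε ^ 2 / Real.sqrt (ε ^ 2 + u ε ^ 2) with hδdef
  have hδpos : 0 < δ := by positivity
  have hδε : δ ≤ ε := by
    rw [hδdef, div_le_iff₀ hSpos]
    nlinarith
  have hδK : δ ∈ K := by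
    refine ⟨⟨hδpos.le, hδε⟩, ?_⟩
    have hchord := sift_chord hu hu0 hεx δ ε hδpos.le hδε hε1
    have huδ : 0 ≤ u δ := hunn δ ⟨by linarith, hδε.trans hε1⟩
    have hkey : δ ^ 2 * (ε ^ 2 + u ε ^ 2) = ε ^ 4 := by
      rw [hδdef, div_pow, hS2, div_mul_cancel₀ _
        (by nlinarith [sq_nonneg (u ε), pow_pos hε 2] : (0:ℝ) < ε ^ 2 + u ε ^ 2).ne']
      ring
    have h1 : 0 ≤ δ * u ε - ε * u δ := by linarith
    have h2 : 0 ≤ δ * u ε + ε * u δ := by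
      have := mul_nonneg hδpos.le hM
      have := mul_nonneg hε.le huδ
      linarith
    have h3 : (ε * u δ) ^ 2 ≤ (δ * u ε) ^ 2 := by nlinarith [mul_nonneg h1 h2]
    have h4 : ε ^ 2 * (δ ^ 2 + u δ ^ 2) ≤ ε ^ 4 := by nlinarith [h3, hkey]
    have h5 : ε ^ 2 * (δ ^ 2 + u δ ^ 2) ≤ ε ^ 2 * ε ^ 2 := by nlinarith [h4]
    exact le_of_mul_le_mul_left h5 (pow_pos hε 2)
  have hs₀pos : 0 < s₀ := lt_of_lt_of_le hδpos (le_csSup hbdd hδK)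
  refine ⟨s₀, hs₀pos, hs₀ε, heqn, ?_⟩
  intro s hs hsx hseq
  rcases lt_trichotomy s s₀ with h | h | h
  · have := hgstrict s s₀ hs.le h (hs₀ε.trans hε1)
    rw [hseq, heqn] at this
    exact absurd this (lt_irrefl _)
  · exact h
  · have := hgstrict s₀ s h0s₀ h hsx
    rw [hseq, heqn] at this
    exact absurd this (lt_irrefl _)

open MeasureTheory


set_option maxHeartbeats 1000000 in
/-- Let `E ⊂ ℝ²` be a convex body and `x = z ∈ ∂E`. If, in an orthonormal frame `{e, f}` with
`e` tangent to `∂E` at `z`, the boundary `∂E - z` coincides inside the rectangle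
`{|s| ≤ ε_x, t ≤ t_x}` with the graph of a nonnegative convex function `u` with `u 0 = 0`,
then for every `0 < ε ≤ min ε_x t_x` the circle `∂B_ε(z)` meets `∂E` in exactly two points. -/
theorem sphere_inter_frontier_two_points
    (E : Set (EuclideanSpace ℝ (Fin 2))) (hEc : IsCompact E) (hEconv : Convex ℝ E)
    (hEint : (interior E).Nonempty)
    (z : EuclideanSpace ℝ (Fin 2)) (hz : z ∈ frontier E)
    (e f : EuclideanSpace ℝ (Fin 2)) (he : ‖e‖ = 1) (hf : ‖f‖ = 1)
    (hef : (inner ℝ e f : ℝ) = 0)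
    (εx tx : ℝ) (hεx : 0 < εx) (htx : 0 < tx)
    (u : ℝ → ℝ) (hu : ConvexOn ℝ (Set.Icc (-εx) εx) u) (hu0 : u 0 = 0)
    (hunn : ∀ s ∈ Set.Icc (-εx) εx, 0 ≤ u s)
    (hgraph : frontier E ∩ {p | ∃ s t : ℝ, |s| ≤ εx ∧ t ≤ tx ∧ p = z + s • e + t • f}
      = {p | ∃ s : ℝ, |s| ≤ εx ∧ p = z + s • e + u s • f}) :
    ∀ ε : ℝ, 0 < ε → ε ≤ min εx tx →
      ∃ p q : EuclideanSpace ℝ (Fin 2), p ≠ q ∧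
        frontier E ∩ Metric.sphere z ε = {p, q} := by
  intro ε hε hεmin
  have hε1 : ε ≤ εx := le_trans hεmin (min_le_left _ _)
  have hε2 : ε ≤ tx := le_trans hεmin (min_le_right _ _)
  obtain ⟨sp, hsp_pos, hsp_le, hsp_eq, hsp_uniq⟩ :=
    sift_aux E z e f he hf hef εx tx hεx htx u hu hu0 hunn hgraph ε hε hε1 hε2
  -- the flipped data
  have hne : ‖-e‖ = 1 := by rw [norm_neg]; exact he
  have hnef : (inner ℝ (-e) f : ℝ) = 0 := by rw [inner_neg_left, hef, neg_zero]
  have hflip0 : (fun s => u (-s)) 0 = 0 := by simp [hu0]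
  have hflipnn : ∀ s ∈ Set.Icc (-εx) εx, 0 ≤ (fun s => u (-s)) s := fun s hs =>
    hunn (-s) ⟨by linarith [hs.2], by linarith [hs.1]⟩
  have hgraph' : frontier E ∩ {p | ∃ s t : ℝ, |s| ≤ εx ∧ t ≤ tx ∧ p = z + s • (-e) + t • f}
      = {p | ∃ s : ℝ, |s| ≤ εx ∧ p = z + s • (-e) + (fun s => u (-s)) s • f} := by
    have e1 : {p : EuclideanSpace ℝ (Fin 2) | ∃ s t : ℝ, |s| ≤ εx ∧ t ≤ tx ∧ p = z + s • (-e) + t • f}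
        = {p | ∃ s t : ℝ, |s| ≤ εx ∧ t ≤ tx ∧ p = z + s • e + t • f} := by
      ext p
      constructor
      · rintro ⟨s, t, hs, ht, rfl⟩
        exact ⟨-s, t, by simpa using hs, ht, by simp [smul_neg, neg_smul]⟩
      · rintro ⟨s, t, hs, ht, rfl⟩
        exact ⟨-s, t, by simpa using hs, ht, by simp [smul_neg, neg_smul]⟩
    have e2 : {p : EuclideanSpace ℝ (Fin 2) | ∃ s : ℝ, |s| ≤ εx ∧ p = z + s • (-e) + (fun s => u (-s)) s • f}
        = {p | ∃ s : ℝ, |s| ≤ εx ∧ p = z + s • e + u s • f} := by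
      ext p
      constructor
      · rintro ⟨s, hs, rfl⟩
        exact ⟨-s, by simpa using hs, by simp [smul_neg, neg_smul]⟩
      · rintro ⟨s, hs, rfl⟩
        refine ⟨-s, by simpa using hs, ?_⟩
        simp [smul_neg, neg_smul]
    rw [e1, e2]
    exact hgraph
  obtain ⟨sm, hsm_pos, hsm_le, hsm_eq, hsm_uniq⟩ :=
    sift_aux E z (-e) f hne hf hnef εx tx hεx htx _ (sift_flip_convex hu) hflip0 hflipnn
      hgraph' ε hε hε1 hε2

  refine ⟨z + sp • e + u sp • f, z + (-sm) • e + u (-sm) • f, ?_, ?_⟩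
  · intro hpq
    obtain ⟨h1, _⟩ := sift_inj he hf hef hpq
    linarith
  · ext q'
    simp only [Set.mem_insert_iff, Set.mem_singleton_iff]
    constructor
    · rintro ⟨hqf, hqs⟩
      have hdist : ‖q' - z‖ = ε := by rwa [Metric.mem_sphere, dist_eq_norm] at hqs
      obtain ⟨a, b, hab⟩ := sift_decomp he hf hef (q' - z)
      have hq' : q' = z + a • e + b • f := by
        rw [sub_eq_iff_eq_add'] at hab
        rw [hab]; abel
      have hnormsq : a ^ 2 + b ^ 2 = ε ^ 2 := by
        rw [← sift_normsq he hf hef a b, ← hab, hdist]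
      have haε : |a| ≤ ε := by
        rw [abs_le]
        constructor <;> nlinarith [sq_nonneg b]
      have hbε : b ≤ ε := by nlinarith [sq_nonneg a]
      have hmem : q' ∈ frontier E ∩
          {p | ∃ s t : ℝ, |s| ≤ εx ∧ t ≤ tx ∧ p = z + s • e + t • f} :=
        ⟨hqf, a, b, le_trans haε hε1, le_trans hbε hε2, hq'⟩
      rw [hgraph] at hmem
      obtain ⟨s', hs', heq⟩ := hmem
      obtain ⟨ha', hb'⟩ := sift_inj he hf hef (hq'.symm.trans heq)
      rw [← ha'] at heq hb'
      have hgeq : a ^ 2 + u a ^ 2 = ε ^ 2 := by rw [← hb']; exact hnormsq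
      rcases lt_trichotomy a 0 with hl | h0 | hr
      · right
        have hma : -a = sm := by
          refine hsm_uniq (-a) (by linarith) ?_ ?_
          · have := (abs_le.mp haε).1
            linarith
          · rw [neg_neg]
            linear_combination hgeq
        rw [heq, ← hma, neg_neg]
      · exfalso
        rw [h0, hu0] at hgeq
        nlinarith
      · left
        have hpa : a = sp := by
          refine hsp_uniq a hr ?_ hgeq
          exact le_trans (le_abs_self a) (le_trans haε hε1)
        rw [heq, hpa]
    · have hsphere : ∀ c d : ℝ, c ^ 2 + d ^ 2 = ε ^ 2 →
          z + c • e + d • f ∈ Metric.sphere z ε := by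
        intro c d hcd
        rw [Metric.mem_sphere, dist_eq_norm]
        have h1 : (z + c • e + d • f) - z = c • e + d • f := by abel
        rw [h1]
        have h2 : ‖c • e + d • f‖ ^ 2 = ε ^ 2 := by rw [sift_normsq he hf hef]; exact hcd
        calc ‖c • e + d • f‖ = Real.sqrt (‖c • e + d • f‖ ^ 2) :=
              (Real.sqrt_sq (norm_nonneg _)).symm
          _ = ε := by rw [h2, Real.sqrt_sq hε.le]
      have hfrontier : ∀ c : ℝ, |c| ≤ εx → z + c • e + u c • f ∈ frontier E := by
        intro c hc
        have : z + c • e + u c • f ∈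
            {p | ∃ s : ℝ, |s| ≤ εx ∧ p = z + s • e + u s • f} := ⟨c, hc, rfl⟩
        rw [← hgraph] at this
        exact this.1
      rintro (rfl | rfl)
      · refine ⟨hfrontier sp ?_, hsphere sp (u sp) hsp_eq⟩
        rw [abs_le]
        constructor <;> [linarith; linarith [hsp_le.trans hε1]]
      · refine ⟨hfrontier (-sm) ?_, hsphere (-sm) (u (-sm)) ?_⟩
        · rw [abs_le]
          constructor <;> [linarith [hsm_le.trans hε1]; linarith [hsm_pos, hε1, hsm_le]]
        · linear_combination hsm_eq
end

section
/- Let u : [x_−, x_+] → ℝ be a convex C^{1,1} function, and let l^±(x) = u(x_±) + u'(x_±)(x − x_±) be its tangent lines at the endpoints. Then the perimeter excess of the graph over the tangent lines satisfies ∫_{x̄}^{x_+} √(1+(u'_+)²) − ∫_{x̄}^{x_+} √(1+(u')²) ≤ u'_+ ∫_{x̄}^{x_+} (t − x̄) u''(t) dt for any x̄ ∈ [x_−, x_+] with u'_+ := u'(x_+) ≥ 0, where u'' exists a.e. -/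
open MeasureTheory


lemma fubini_aux (g : ℝ → ℝ) (a b : ℝ) (hab : a ≤ b)
    (hg : IntegrableOn g (Set.Ioc a b)) :
    (∫ t in a..b, (∫ s in t..b, g s)) = ∫ s in a..b, (s - a) * g s := by
  set μ := volume.restrict (Set.Ioc a b) with hμ
  haveI : IsFiniteMeasure μ := by
    constructor
    rw [hμ, Measure.restrict_apply_univ, Real.volume_Ioc]
    exact ENNReal.ofReal_lt_top
  set F : ℝ → ℝ → ℝ := fun t s => if t < s then g s else 0 with hF
  have hunc : Function.uncurry F =
      Set.indicator {p : ℝ × ℝ | p.1 < p.2} (fun p => g p.2) := by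
    ext p
    simp [hF, Function.uncurry, Set.indicator_apply]
  have hgprod : Integrable (fun p : ℝ × ℝ => g p.2) (μ.prod μ) := by
    have := (integrable_const (μ := μ) (1 : ℝ)).mul_prod hg
    simpa using this
  have hFint : Integrable (Function.uncurry F) (μ.prod μ) := by
    rw [hunc]
    exact hgprod.indicator (measurableSet_lt measurable_fst measurable_snd)
  have hswap := integral_integral_swap hFint
  have hL : (∫ t in a..b, (∫ s in t..b, g s)) = ∫ t, ∫ s, F t s ∂μ ∂μ := by
    rw [intervalIntegral.integral_of_le hab]
    apply setIntegral_congr_fun measurableSet_Ioc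
    intro t ht
    have h1 : (∫ s in t..b, g s) = ∫ s in Set.Ioc t b, g s := by
      rw [intervalIntegral.integral_of_le ht.2]
    show (∫ s in t..b, g s) = ∫ s, F t s ∂μ
    have h2 : (∫ s, F t s ∂μ) = ∫ s in Set.Ioc a b, (Set.Ioc t b).indicator g s := by
      apply setIntegral_congr_fun measurableSet_Ioc
      intro s hs
      simp only [hF, Set.indicator_apply, Set.mem_Ioc]
      by_cases h : t < s
      · simp [h, hs.2]
      · simp [h]
    rw [h1, h2, setIntegral_indicator measurableSet_Ioc, Set.Ioc_inter_Ioc,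
      max_eq_right ht.1.le, min_self]
  have hR : (∫ s, ∫ t, F t s ∂μ ∂μ) = ∫ s in a..b, (s - a) * g s := by
    rw [intervalIntegral.integral_of_le hab]
    apply setIntegral_congr_fun measurableSet_Ioc
    intro s hs
    show (∫ t, F t s ∂μ) = (s - a) * g s
    have h2 : (∫ t, F t s ∂μ) = ∫ t in Set.Ioc a b, (Set.Iio s).indicator (fun _ => g s) t := by
      apply setIntegral_congr_fun measurableSet_Ioc
      intro t _
      simp [hF, Set.indicator_apply]
    rw [h2, setIntegral_indicator measurableSet_Iio]
    have hset : Set.Ioc a b ∩ Set.Iio s = Set.Ioo a s := by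
      ext t
      simp only [Set.mem_inter_iff, Set.mem_Ioc, Set.mem_Iio, Set.mem_Ioo]
      constructor
      · rintro ⟨⟨h1, _⟩, h3⟩; exact ⟨h1, h3⟩
      · rintro ⟨h1, h2⟩; exact ⟨⟨h1, h2.le.trans hs.2⟩, h2⟩
    rw [hset, setIntegral_const, Real.volume_real_Ioo_of_le (by linarith [hs.1])]
    simp [mul_comm]
  rw [hL, hswap, hR]

lemma sqrt_excess_ineq (a b : ℝ) (ha : 0 ≤ a) (hba : b ≤ a) :
    Real.sqrt (1 + a ^ 2) - Real.sqrt (1 + b ^ 2) ≤ a * (a - b) := by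
  set A := Real.sqrt (1 + a ^ 2) with hA
  set B := Real.sqrt (1 + b ^ 2) with hB
  have hA2 : A ^ 2 = 1 + a ^ 2 := Real.sq_sqrt (by positivity)
  have hB2 : B ^ 2 = 1 + b ^ 2 := Real.sq_sqrt (by positivity)
  have hA0 : 0 ≤ A := Real.sqrt_nonneg _
  have hB0 : 0 ≤ B := Real.sqrt_nonneg _
  have hA1 : 1 ≤ A := by nlinarith
  have hB1 : 1 ≤ B := by nlinarith
  have hAa : a ≤ A := by nlinarith
  have hBb : b ≤ B := by
    have h1 : |b| ≤ B := by
      rw [hB, ← Real.sqrt_sq_eq_abs]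
      exact Real.sqrt_le_sqrt (by nlinarith)
    exact (le_abs_self b).trans h1
  have key : (A - B) * (A + B) = (a - b) * (a + b) := by nlinarith
  have h1 : 0 ≤ (a - b) * (a * A - a) := by
    apply mul_nonneg (by linarith)
    nlinarith
  have h2 : 0 ≤ (a - b) * (a * B - b) := by
    apply mul_nonneg (by linarith)
    nlinarith
  nlinarith [mul_pos (show (0:ℝ) < A + B by linarith) (show (0:ℝ) < A + B by linarith)]

/-- Perimeter excess estimate: for a convex `C^{1,1}` function `u` on `[x₋, x₊]` with second
derivative `u''` (a.e., linked to `u'` by the fundamental theorem of calculus), with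
`u'_+ = u'(x₊) ≥ 0` and any `x̄ ∈ [x₋, x₊]`,
`∫_{x̄}^{x₊} √(1+(u'_+)²) - ∫_{x̄}^{x₊} √(1+(u')²) ≤ u'_+ ∫_{x̄}^{x₊} (t - x̄) u''(t) dt`. -/
theorem perimeter_excess_le (u u'' : ℝ → ℝ) (xm xp xb : ℝ) (hle : xm ≤ xp)
    (hxb : xb ∈ Set.Icc xm xp)
    (hconv : ConvexOn ℝ (Set.Icc xm xp) u)
    (hdiff : ∀ t ∈ Set.Icc xm xp, DifferentiableAt ℝ u t)
    (hnn : ∀ t ∈ Set.Icc xm xp, 0 ≤ u'' t)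
    (hFTC : ∀ a ∈ Set.Icc xm xp, ∀ b ∈ Set.Icc xm xp,
      deriv u b - deriv u a = ∫ s in a..b, u'' s)
    (hInt : IntervalIntegrable u'' volume xm xp)
    (hIntS : IntervalIntegrable (fun t => Real.sqrt (1 + (deriv u t) ^ 2)) volume xb xp)
    (hIntW : IntervalIntegrable (fun t => (t - xb) * u'' t) volume xb xp)
    (hpos : 0 ≤ deriv u xp) :
    (∫ _t in xb..xp, Real.sqrt (1 + (deriv u xp) ^ 2))
        - ∫ t in xb..xp, Real.sqrt (1 + (deriv u t) ^ 2)
      ≤ deriv u xp * ∫ t in xb..xp, (t - xb) * u'' t := by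
  obtain ⟨hxm, hxp⟩ := hxb
  set a := deriv u xp with ha
  have hIccInt : IntegrableOn u'' (Set.Icc xm xp) :=
    (integrableOn_Icc_iff_integrableOn_Ioc).mpr hInt.1
  -- comparison function
  set G : ℝ → ℝ := fun t => a * ∫ s in t..xp, u'' s with hG
  have hGcont : ContinuousOn G (Set.uIcc xb xp) := by
    apply ContinuousOn.mul continuousOn_const
    apply intervalIntegral.continuousOn_primitive_interval_left
    rw [Set.uIcc_of_le hxp]
    exact hIccInt.mono_set (Set.Icc_subset_Icc hxm le_rfl)
  have hGint : IntervalIntegrable G volume xb xp := hGcont.intervalIntegrable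
  -- pointwise inequality
  have hpt : ∀ t ∈ Set.Icc xb xp,
      Real.sqrt (1 + a ^ 2) - Real.sqrt (1 + (deriv u t) ^ 2) ≤ G t := by
    intro t ht
    have htm : t ∈ Set.Icc xm xp := ⟨hxm.trans ht.1, ht.2⟩
    have hab : a - deriv u t = ∫ s in t..xp, u'' s :=
      hFTC t htm xp ⟨hle, le_rfl⟩
    have hnn' : (0:ℝ) ≤ ∫ s in t..xp, u'' s :=
      intervalIntegral.integral_nonneg ht.2 (fun s hs => hnn s ⟨htm.1.trans hs.1, hs.2⟩)
    have hba : deriv u t ≤ a := by linarith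
    calc Real.sqrt (1 + a ^ 2) - Real.sqrt (1 + (deriv u t) ^ 2)
        ≤ a * (a - deriv u t) := sqrt_excess_ineq a (deriv u t) hpos hba
      _ = G t := by rw [hG]; dsimp only; rw [← hab]
  -- integral comparison
  have hconst : IntervalIntegrable (fun _ : ℝ => Real.sqrt (1 + a ^ 2)) volume xb xp :=
    intervalIntegrable_const
  have step1 : (∫ _t in xb..xp, Real.sqrt (1 + a ^ 2))
      - (∫ t in xb..xp, Real.sqrt (1 + (deriv u t) ^ 2)) ≤ ∫ t in xb..xp, G t := by
    rw [← intervalIntegral.integral_sub hconst hIntS]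
    exact intervalIntegral.integral_mono_on hxp (hconst.sub hIntS) hGint hpt
  have step2 : (∫ t in xb..xp, G t) = a * ∫ t in xb..xp, (t - xb) * u'' t := by
    rw [hG]
    rw [intervalIntegral.integral_const_mul]
    congr 1
    exact fubini_aux u'' xb xp hxp
      (hIccInt.mono_set ((Set.Ioc_subset_Icc_self).trans (Set.Icc_subset_Icc hxm le_rfl)))
  calc (∫ _t in xb..xp, Real.sqrt (1 + a ^ 2))
      - (∫ t in xb..xp, Real.sqrt (1 + (deriv u t) ^ 2)) ≤ ∫ t in xb..xp, G t := step1
    _ = a * ∫ t in xb..xp, (t - xb) * u'' t := step2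
end

section
/- Let u : ℝ → ℝ be convex and C^{1,1} with u(0) = u'(0) = 0 and suppose 0 is a Lebesgue point of u'' with a := u''(0) > 0. Then the intersection point x̄ of the two tangent lines l^±(x) = u(±x₀) + u'(±x₀)(x ∓ x₀) at ±x₀ satisfies x̄/x₀ → 0 as x₀ → 0⁺. -/
open MeasureTheory Filter

private lemma integral_id' (p q : ℝ) : (∫ x in p..q, (x:ℝ)) = (q ^ 2 - p ^ 2) / 2 :=
  open intervalIntegral in integral_id

private lemma intervalIntegrable_id' (p q : ℝ) :
    IntervalIntegrable (fun x : ℝ => x) volume p q :=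
  open intervalIntegral in intervalIntegrable_id

/-- Let `u` be convex `C^{1,1}` with `u 0 = u' 0 = 0` and suppose `0` is a Lebesgue point of
`u''` with value `a = u''(0) > 0`. Then the intersection point `x̄` of the tangent lines to the
graph at `±x₀` satisfies `x̄ / x₀ → 0` as `x₀ → 0⁺`. -/
theorem tangent_intersection_small (u u'' : ℝ → ℝ) (a : ℝ) (ha : 0 < a)
    (hconv : ConvexOn ℝ Set.univ u)
    (hdiff : ∀ t : ℝ, DifferentiableAt ℝ u t)
    (hnn : ∀ t : ℝ, 0 ≤ u'' t)
    (hInt : ∀ x y : ℝ, IntervalIntegrable u'' volume x y)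
    (hFTC : ∀ x y : ℝ, deriv u y - deriv u x = ∫ s in x..y, u'' s)
    (h0 : u 0 = 0) (h0' : deriv u 0 = 0)
    (hLeb : Tendsto (fun x : ℝ => (1 / (2 * x)) * ∫ s in (-x)..x, |u'' s - a|)
      (nhdsWithin 0 (Set.Ioi 0)) (nhds 0)) :
    Tendsto (fun x₀ : ℝ =>
        ((x₀ * (deriv u x₀ + deriv u (-x₀)) - (u x₀ - u (-x₀)))
            / (deriv u x₀ - deriv u (-x₀))) / x₀)
      (nhdsWithin 0 (Set.Ioi 0)) (nhds 0) := by
  -- the derivative is the primitive of u''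
  have hderiv : ∀ y : ℝ, deriv u y = ∫ s in (0:ℝ)..y, u'' s := by
    intro y
    have h := hFTC 0 y
    rw [h0'] at h
    linarith
  have hcontD : Continuous (deriv u) := by
    have h : Continuous fun y : ℝ => ∫ s in (0:ℝ)..y, u'' s :=
      intervalIntegral.continuous_primitive (fun p q => hInt p q) 0
    have : (deriv u) = fun y : ℝ => ∫ s in (0:ℝ)..y, u'' s := funext hderiv
    rw [this]; exact h
  have hintu : ∀ p q : ℝ, (∫ t in p..q, deriv u t) = u q - u p := fun p q =>
    intervalIntegral.integral_deriv_eq_sub (fun t _ => hdiff t)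
      (hcontD.intervalIntegrable p q)
  set ε : ℝ → ℝ := fun x => (1 / (2 * x)) * ∫ s in (-x)..x, |u'' s - a| with hεdef
  have hIabs : ∀ x y : ℝ, IntervalIntegrable (fun s => |u'' s - a|) volume x y :=
    fun x y => ((hInt x y).sub intervalIntegrable_const).abs
  -- main pointwise estimate
  have main : ∀ x₀ : ℝ, 0 < x₀ → ε x₀ < a / 2 →
      |((x₀ * (deriv u x₀ + deriv u (-x₀)) - (u x₀ - u (-x₀)))
          / (deriv u x₀ - deriv u (-x₀))) / x₀| ≤ (4 / a) * ε x₀ := by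
    intro x₀ hx hε
    set I : ℝ := ∫ s in (-x₀)..x₀, |u'' s - a| with hIdef
    have hI0 : 0 ≤ I := by
      rw [hIdef]
      apply intervalIntegral.integral_nonneg (by linarith)
      intro s _; exact abs_nonneg _
    have hIa : I < a * x₀ := by
      have : ε x₀ = (1 / (2 * x₀)) * I := rfl
      rw [this] at hε
      have h2 : (0:ℝ) < 2 * x₀ := by linarith
      rw [one_div, inv_mul_lt_iff₀ h2] at hε
      nlinarith
    -- subinterval bound
    have hsub : ∀ p q : ℝ, -x₀ ≤ p → p ≤ q → q ≤ x₀ →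
        |∫ s in p..q, (u'' s - a)| ≤ I := by
      intro p q h1 h2 h3
      calc |∫ s in p..q, (u'' s - a)| ≤ ∫ s in p..q, |u'' s - a| :=
            intervalIntegral.abs_integral_le_integral_abs h2
        _ ≤ I := intervalIntegral.integral_mono_interval h1 h2 h3
            (ae_of_all _ fun s => abs_nonneg _) (hIabs _ _)
    have hdiffFTC : ∀ p q : ℝ, -x₀ ≤ p → p ≤ q → q ≤ x₀ →
        |deriv u q - deriv u p - a * (q - p)| ≤ I := by
      intro p q h1 h2 h3
      have e : (∫ s in p..q, (u'' s - a)) = deriv u q - deriv u p - a * (q - p) := by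
        rw [intervalIntegral.integral_sub (hInt p q) intervalIntegrable_const,
          intervalIntegral.integral_const, ← hFTC p q]
        simp only [smul_eq_mul]; ring
      rw [← e]; exact hsub p q h1 h2 h3
    -- estimate A = x₀ u'(x₀) - (u x₀ - u 0)
    have hA : |x₀ * deriv u x₀ - (u x₀ - u 0) - a * x₀ ^ 2 / 2| ≤ I * x₀ := by
      have hptw : ∀ t ∈ Set.uIoc (0:ℝ) x₀,
          ‖deriv u x₀ - deriv u t - a * (x₀ - t)‖ ≤ I := by
        intro t ht
        rw [Set.uIoc_of_le hx.le] at ht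
        exact hdiffFTC t x₀ (by linarith [ht.1]) ht.2 le_rfl
      have hb := intervalIntegral.norm_integral_le_of_norm_le_const hptw
      have hval : (∫ t in (0:ℝ)..x₀, (deriv u x₀ - deriv u t - a * (x₀ - t)))
          = x₀ * deriv u x₀ - (u x₀ - u 0) - a * x₀ ^ 2 / 2 := by
        have i1 : IntervalIntegrable (fun t : ℝ => deriv u x₀ - deriv u t) volume 0 x₀ :=
          (continuous_const.sub hcontD).intervalIntegrable _ _
        have i2 : IntervalIntegrable (fun t : ℝ => a * (x₀ - t)) volume 0 x₀ :=
          (continuous_const.mul (continuous_const.sub continuous_id)).intervalIntegrable _ _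
        rw [intervalIntegral.integral_sub i1 i2,
          intervalIntegral.integral_sub intervalIntegrable_const
            (hcontD.intervalIntegrable _ _),
          intervalIntegral.integral_const, hintu,
          intervalIntegral.integral_const_mul,
          intervalIntegral.integral_sub intervalIntegrable_const (intervalIntegrable_id' _ _),
          intervalIntegral.integral_const, integral_id']
        simp only [smul_eq_mul]; ring
      rw [hval] at hb
      rw [Real.norm_eq_abs] at hb
      calc |x₀ * deriv u x₀ - (u x₀ - u 0) - a * x₀ ^ 2 / 2| ≤ I * |x₀ - 0| := hb
        _ = I * x₀ := by rw [sub_zero, abs_of_pos hx]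
    -- estimate B = x₀ u'(-x₀) + (u (-x₀) - u 0)
    have hB : |x₀ * deriv u (-x₀) + (u (-x₀) - u 0) + a * x₀ ^ 2 / 2| ≤ I * x₀ := by
      have hptw : ∀ t ∈ Set.uIoc (-x₀) (0:ℝ),
          ‖deriv u t - deriv u (-x₀) - a * (t + x₀)‖ ≤ I := by
        intro t ht
        rw [Set.uIoc_of_le (by linarith : -x₀ ≤ (0:ℝ))] at ht
        have := hdiffFTC (-x₀) t le_rfl (le_of_lt ht.1) (by linarith [ht.2])
        have e : t - -x₀ = t + x₀ := by ring
        rw [e] at this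
        exact this
      have hb := intervalIntegral.norm_integral_le_of_norm_le_const hptw
      have hval : (∫ t in (-x₀)..(0:ℝ), (deriv u t - deriv u (-x₀) - a * (t + x₀)))
          = -(x₀ * deriv u (-x₀) + (u (-x₀) - u 0) + a * x₀ ^ 2 / 2) := by
        have i1 : IntervalIntegrable (fun t : ℝ => deriv u t - deriv u (-x₀)) volume (-x₀) 0 :=
          (hcontD.sub continuous_const).intervalIntegrable _ _
        have i2 : IntervalIntegrable (fun t : ℝ => a * (t + x₀)) volume (-x₀) 0 :=
          (continuous_const.mul (continuous_id.add continuous_const)).intervalIntegrable _ _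
        rw [intervalIntegral.integral_sub i1 i2,
          intervalIntegral.integral_sub (hcontD.intervalIntegrable _ _)
            intervalIntegrable_const,
          intervalIntegral.integral_const, hintu,
          intervalIntegral.integral_const_mul,
          intervalIntegral.integral_add (intervalIntegrable_id' _ _) intervalIntegrable_const,
          intervalIntegral.integral_const, integral_id']
        simp only [smul_eq_mul]; ring
      rw [hval] at hb
      rw [Real.norm_eq_abs, abs_neg] at hb
      calc |x₀ * deriv u (-x₀) + (u (-x₀) - u 0) + a * x₀ ^ 2 / 2| ≤ I * |0 - -x₀| := hb
        _ = I * x₀ := by rw [zero_sub, neg_neg, abs_of_pos hx]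
    set N : ℝ := x₀ * (deriv u x₀ + deriv u (-x₀)) - (u x₀ - u (-x₀)) with hNdef
    set D : ℝ := deriv u x₀ - deriv u (-x₀) with hDdef
    have hN : |N| ≤ 2 * I * x₀ := by
      have : N = (x₀ * deriv u x₀ - (u x₀ - u 0) - a * x₀ ^ 2 / 2)
          + (x₀ * deriv u (-x₀) + (u (-x₀) - u 0) + a * x₀ ^ 2 / 2) := by
        rw [hNdef]; ring
      rw [this]
      calc |(x₀ * deriv u x₀ - (u x₀ - u 0) - a * x₀ ^ 2 / 2)
          + (x₀ * deriv u (-x₀) + (u (-x₀) - u 0) + a * x₀ ^ 2 / 2)|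
          ≤ |x₀ * deriv u x₀ - (u x₀ - u 0) - a * x₀ ^ 2 / 2|
            + |x₀ * deriv u (-x₀) + (u (-x₀) - u 0) + a * x₀ ^ 2 / 2| := abs_add_le _ _
        _ ≤ I * x₀ + I * x₀ := add_le_add hA hB
        _ = 2 * I * x₀ := by ring
    have hD : a * x₀ ≤ D := by
      have h1 : |D - a * (2 * x₀)| ≤ I := by
        have e : D - a * (2 * x₀) = deriv u x₀ - deriv u (-x₀) - a * (x₀ - (-x₀)) := by
          rw [hDdef]; ring
        rw [e]
        exact hdiffFTC (-x₀) x₀ le_rfl (by linarith) le_rfl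
      have := abs_le.mp h1
      nlinarith
    have hDpos : 0 < D := lt_of_lt_of_le (by positivity) hD
    have habs : |N / D / x₀| = |N| / (D * x₀) := by
      rw [abs_div, abs_div, abs_of_pos hDpos, abs_of_pos hx, div_div]
    rw [habs]
    have hεval : (4 / a) * ε x₀ = 2 * I / (a * x₀) := by
      have : ε x₀ = (1 / (2 * x₀)) * I := rfl
      rw [this]
      field_simp
      ring
    rw [hεval]
    calc |N| / (D * x₀) ≤ (2 * I * x₀) / (a * x₀ * x₀) :=
          div_le_div₀ (by positivity) hN (by positivity)
            (by nlinarith)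
      _ = 2 * I / (a * x₀) := by
          field_simp
  -- conclude by squeezing
  have hg : Tendsto (fun x : ℝ => (4 / a) * ε x) (nhdsWithin 0 (Set.Ioi 0)) (nhds 0) := by
    have h := hLeb.const_mul (4 / a)
    rw [mul_zero] at h
    exact h
  apply squeeze_zero_norm' _ hg
  filter_upwards [self_mem_nhdsWithin,
    hLeb.eventually_lt_const (by linarith : (0:ℝ) < a / 2)] with x hx hx2
  rw [Real.norm_eq_abs]
  exact main x hx hx2
end

section
/- For γ ∈ (0, π) and α > γ close to γ, one has the expansion 1 − (1 − sin(α−γ)cos γ / sin α)·√(1 + tan²(α−γ)) = (α−γ)·(cos γ / sin γ) + o(α−γ) as α → γ⁺. -/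
open Filter Real

/-- Key Taylor expansion in the proof of the contact-angle inequality: for `γ ∈ (0, π)`,
`1 - (1 - sin(α-γ) cos γ / sin α) √(1 + tan²(α-γ)) = (α-γ)(cos γ / sin γ) + o(α-γ)`
as `α → γ⁺`. -/
theorem contact_angle_taylor_expansion (γ : ℝ) (hγ : γ ∈ Set.Ioo 0 Real.pi) :
    Tendsto (fun α : ℝ =>
        ((1 - (1 - Real.sin (α - γ) * Real.cos γ / Real.sin α) *
              Real.sqrt (1 + Real.tan (α - γ) ^ 2))
            - (α - γ) * (Real.cos γ / Real.sin γ)) / (α - γ))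
      (nhdsWithin γ (Set.Ioi γ)) (nhds 0) := by
  have hsin : Real.sin γ ≠ 0 := ne_of_gt (Real.sin_pos_of_pos_of_lt_pi hγ.1 hγ.2)
  set F : ℝ → ℝ := fun α => 1 - (1 - Real.sin (α - γ) * Real.cos γ / Real.sin α) *
      Real.sqrt (1 + Real.tan (α - γ) ^ 2) with hF
  have hid : HasDerivAt (fun α : ℝ => α - γ) 1 γ := (hasDerivAt_id γ).sub_const γ
  have htan : HasDerivAt (fun α : ℝ => Real.tan (α - γ)) 1 γ := by
    have h0 : HasDerivAt Real.tan (1 / Real.cos 0 ^ 2) (γ - γ) := by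
      rw [sub_self]; exact Real.hasDerivAt_tan (by simp)
    simpa using h0.comp_sub_const γ γ
  have hinner : HasDerivAt (fun α : ℝ => 1 + Real.tan (α - γ) ^ 2) 0 γ := by
    have := ((htan.pow 2).const_add 1)
    simpa using this
  have hH : HasDerivAt (fun α : ℝ => Real.sqrt (1 + Real.tan (α - γ) ^ 2)) 0 γ := by
    have hs := (Real.hasDerivAt_sqrt (x := 1 + Real.tan (γ - γ) ^ 2)
      (by simp [Real.tan_zero])).comp γ hinner
    simpa [Function.comp_def] using hs
  have hN : HasDerivAt (fun α : ℝ => Real.sin (α - γ) * Real.cos γ) (Real.cos γ) γ := by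
    have h0 : HasDerivAt Real.sin (Real.cos 0) (γ - γ) := by
      rw [sub_self]; exact Real.hasDerivAt_sin 0
    simpa using (h0.comp_sub_const γ γ).mul_const (Real.cos γ)
  have hD : HasDerivAt Real.sin (Real.cos γ) γ := Real.hasDerivAt_sin γ
  have hQ : HasDerivAt (fun α : ℝ => Real.sin (α - γ) * Real.cos γ / Real.sin α)
      (Real.cos γ / Real.sin γ) γ := by
    have h := hN.div hD hsin
    refine h.congr_deriv ?_
    simp [Real.sin_zero]
    field_simp
  have hG : HasDerivAt (fun α : ℝ => 1 - Real.sin (α - γ) * Real.cos γ / Real.sin α)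
      (-(Real.cos γ / Real.sin γ)) γ := by
    simpa using hQ.const_sub 1
  have hFderiv : HasDerivAt F (Real.cos γ / Real.sin γ) γ := by
    have h := (hG.mul hH).const_sub 1
    refine h.congr_deriv ?_
    simp [Real.tan_zero, Real.sqrt_one]
  have hF0 : F γ = 0 := by simp [hF, Real.tan_zero]
  have hslope := hasDerivAt_iff_tendsto_slope.mp hFderiv
  have hslope' : Tendsto (slope F γ) (nhdsWithin γ (Set.Ioi γ))
      (nhds (Real.cos γ / Real.sin γ)) :=
    hslope.mono_left (nhdsWithin_mono γ (fun x hx => ne_of_gt hx))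
  have hfin := hslope'.sub_const (Real.cos γ / Real.sin γ)
  rw [sub_self] at hfin
  refine hfin.congr' ?_
  filter_upwards [self_mem_nhdsWithin] with α hα
  have hne : α - γ ≠ 0 := sub_ne_zero.mpr (ne_of_gt hα)
  rw [slope_def_field, hF0, sub_zero, div_sub' hne]
end

section
/- Let n ≥ 2 and for R > 0 let E_R = D_R × [0, ε_R] ⊂ ℝⁿ be the cylinder of radius R and height ε_R = (ω_{n−1} R^{n−1})^{-1} (so |E_R| = 1), where D_R is the (n−1)-dimensional disk of radius R. Then for every α ∈ (1, n), the α-Riesz energy satisfies 𝓘_α(E_R) → 0 as R → ∞. -/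
open MeasureTheory Filter

/-- The `α`-Riesz energy of `E ⊆ ℝⁿ` with values in `ℝ≥0∞`. -/
noncomputable def rieszEnergy (n : ℕ) (α : ℝ) (E : Set (EuclideanSpace ℝ (Fin n))) : ENNReal :=
  sInf {r : ENNReal | ∃ μ : Measure (EuclideanSpace ℝ (Fin n)),
    IsProbabilityMeasure μ ∧ μ E = 1 ∧
    r = ∫⁻ p, (edist p.1 p.2) ^ (-((n : ℝ) - α)) ∂(μ.prod μ)}

open Metric ENNReal in
noncomputable def phi (n : ℕ) (x : EuclideanSpace ℝ (Fin (n-1))) : EuclideanSpace ℝ (Fin n) :=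
  WithLp.toLp 2 (fun i => if h : (i : ℕ) < n - 1 then x ⟨i, h⟩ else 0)

theorem phi_meas (n : ℕ) : Measurable (phi n) := by
  unfold phi
  apply (WithLp.measurable_toLp 2 _).comp
  apply measurable_pi_lambda
  intro i
  split_ifs with h
  · exact (measurable_pi_apply _).comp (WithLp.measurable_ofLp 2 _)
  · exact measurable_const

theorem phi_dist {n : ℕ} (hn : 1 ≤ n) (x y : EuclideanSpace ℝ (Fin (n-1))) :
    dist (phi n x) (phi n y) = dist x y := by
  rw [EuclideanSpace.dist_eq, EuclideanSpace.dist_eq]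
  congr 1
  have key : ∀ i : Fin n, dist (phi n x i) (phi n y i) ^ 2
      = (fun k : ℕ => if h : k < n - 1 then dist (x ⟨k, h⟩) (y ⟨k, h⟩) ^ 2 else 0) (i : ℕ) := by
    intro i
    simp only [phi, PiLp.toLp_apply]
    split_ifs with h
    · rfl
    · simp
  calc ∑ i : Fin n, dist (phi n x i) (phi n y i) ^ 2
      = ∑ i : Fin n, (fun k : ℕ => if h : k < n - 1 then dist (x ⟨k, h⟩) (y ⟨k, h⟩) ^ 2 else 0) (i:ℕ) :=
        Finset.sum_congr rfl (fun i _ => key i)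
    _ = ∑ k ∈ Finset.range n, (fun k : ℕ => if h : k < n - 1 then dist (x ⟨k, h⟩) (y ⟨k, h⟩) ^ 2 else 0) k :=
        Fin.sum_univ_eq_sum_range (fun k : ℕ => if h : k < n - 1 then dist (x ⟨k, h⟩) (y ⟨k, h⟩) ^ 2 else 0) n
    _ = ∑ i : Fin (n-1), dist (x i) (y i) ^ 2 := by
        obtain ⟨m, rfl⟩ : ∃ m, n = m + 1 := ⟨n - 1, by omega⟩
        rw [Finset.sum_range_succ]
        simp only [Nat.add_sub_cancel]
        rw [dif_neg (lt_irrefl m)]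
        rw [add_zero, ← Fin.sum_univ_eq_sum_range]
        apply Finset.sum_congr rfl
        intro i _
        rw [dif_pos i.isLt]
        simp

theorem phi_edist {n : ℕ} (hn : 1 ≤ n) (x y : EuclideanSpace ℝ (Fin (n-1))) :
    edist (phi n x) (phi n y) = edist x y := by
  rw [edist_dist, edist_dist, phi_dist hn]

theorem phi_zero {n : ℕ} : phi n 0 = 0 := by
  ext i
  simp only [phi, PiLp.toLp_apply]
  split_ifs with h <;> rfl

open Metric ENNReal in
theorem K_lt_top {d : ℕ} (hd : 1 ≤ d) {s : ℝ} (hs : 0 < s) (hsd : s < d) :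
    ∫⁻ z in ball (0 : EuclideanSpace ℝ (Fin d)) 2, (‖z‖₊ : ℝ≥0∞) ^ (-s) < ⊤ := by
  classical
  haveI : NeZero d := ⟨by omega⟩
  set E : Type := EuclideanSpace ℝ (Fin d)
  set f : E → ℝ≥0∞ := fun z => (‖z‖₊ : ℝ≥0∞) ^ (-s) with hf
  set S : ℕ → Set E := fun k => ball (0:E) (2 * (2⁻¹:ℝ)^k) \ ball (0:E) ((2⁻¹:ℝ)^k) with hS
  have hcover : ball (0:E) 2 ⊆ {0} ∪ ⋃ k, S k := by
    intro z hz
    rcases eq_or_ne z 0 with rfl | hz0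
    · exact Or.inl rfl
    right
    have hzpos : 0 < ‖z‖ := norm_pos_iff.2 hz0
    have hex : ∃ k : ℕ, (2⁻¹:ℝ)^k ≤ ‖z‖ := by
      obtain ⟨k, hk⟩ := exists_pow_lt_of_lt_one hzpos (by norm_num : (2⁻¹:ℝ) < 1)
      exact ⟨k, hk.le⟩
    set k := Nat.find hex with hkdef
    have hk : (2⁻¹:ℝ)^k ≤ ‖z‖ := Nat.find_spec hex
    have hk2 : ‖z‖ < 2 * (2⁻¹:ℝ)^k := by
      rcases Nat.eq_zero_or_pos k with h0 | hpos
      · rw [h0]; simpa using (mem_ball_zero_iff.1 hz)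
      · have hmin := Nat.find_min hex (m := k - 1) (by omega)
        obtain ⟨m, hm⟩ : ∃ m, k = m + 1 := ⟨k - 1, by omega⟩
        have hk1 : (2⁻¹:ℝ)^(k-1) = 2 * (2⁻¹:ℝ)^k := by
          rw [hm]; simp only [Nat.add_sub_cancel, pow_succ]; ring
        rw [hk1] at hmin
        linarith [not_le.1 hmin]
    exact Set.mem_iUnion.2 ⟨k, ⟨mem_ball_zero_iff.2 hk2,
      fun hc => absurd (mem_ball_zero_iff.1 hc) (not_lt.2 hk)⟩⟩
  have hq : (0:ℝ) < (2⁻¹:ℝ) ^ ((d:ℝ) - s) := Real.rpow_pos_of_pos (by norm_num) _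
  have hq1 : ((2⁻¹:ℝ) ^ ((d:ℝ) - s)) < 1 :=
    Real.rpow_lt_one (by norm_num) (by norm_num) (by
      have : (1:ℝ) ≤ (d:ℝ) := by exact_mod_cast hd
      linarith)
  set q : ℝ≥0∞ := ENNReal.ofReal ((2⁻¹:ℝ) ^ ((d:ℝ) - s)) with hqdef
  set V : ℝ≥0∞ := volume (ball (0:E) 1) with hV
  have hVlt : V < ⊤ := measure_ball_lt_top
  set c : ℝ≥0∞ := ENNReal.ofReal ((2:ℝ)^(d:ℕ)) with hcdef
  have hbound : ∀ k : ℕ, ∫⁻ z in S k, f z ≤ c * q ^ k * V := by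
    intro k
    set a : ℝ := (2⁻¹:ℝ)^k with ha
    have ha0 : 0 < a := by positivity
    have hstep : ∀ z ∈ S k, f z ≤ ENNReal.ofReal (a ^ (-s)) := by
      intro z hzS
      have hle : a ≤ ‖z‖ := not_lt.1 (fun hc => hzS.2 (mem_ball_zero_iff.2 hc))
      have h1 : ENNReal.ofReal a ≤ (‖z‖₊ : ℝ≥0∞) := by
        rw [← enorm_eq_nnnorm, ← ofReal_norm]
        exact ENNReal.ofReal_le_ofReal hle
      calc f z = ((‖z‖₊ : ℝ≥0∞) ^ s)⁻¹ := by simp only [hf]; rw [ENNReal.rpow_neg]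
        _ ≤ ((ENNReal.ofReal a) ^ s)⁻¹ :=
            ENNReal.inv_le_inv' (ENNReal.rpow_le_rpow h1 hs.le)
        _ = (ENNReal.ofReal a) ^ (-s) := by rw [ENNReal.rpow_neg]
        _ = ENNReal.ofReal (a ^ (-s)) := ENNReal.ofReal_rpow_of_pos ha0
    have hSm : MeasurableSet (S k) := measurableSet_ball.diff measurableSet_ball
    calc ∫⁻ z in S k, f z ≤ ∫⁻ _ in S k, ENNReal.ofReal (a ^ (-s)) :=
          setLIntegral_mono' hSm hstep
      _ = ENNReal.ofReal (a ^ (-s)) * volume (S k) := setLIntegral_const _ _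
      _ ≤ ENNReal.ofReal (a ^ (-s)) * volume (ball (0:E) (2*a)) := by
          gcongr
          exact Set.diff_subset
      _ = ENNReal.ofReal (a ^ (-s)) * (ENNReal.ofReal ((2*a) ^ (d:ℕ)) * V) := by
          rw [Measure.addHaar_ball volume _ (by positivity : (0:ℝ) ≤ 2*a),
            finrank_euclideanSpace_fin]
      _ = ENNReal.ofReal (a ^ (-s) * (2*a) ^ (d:ℕ)) * V := by
          rw [ENNReal.ofReal_mul (by positivity), mul_assoc]
      _ = c * q ^ k * V := by
          congr 1
          rw [hcdef, hqdef, ← ENNReal.ofReal_pow hq.le, ← ENNReal.ofReal_mul (by positivity)]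
          congr 1
          rw [mul_pow]
          have h1 : a ^ (d:ℕ) = a ^ ((d:ℝ)) := (Real.rpow_natCast a d).symm
          have h2 : ((2⁻¹:ℝ) ^ ((d:ℝ) - s)) ^ k = a ^ ((d:ℝ) - s) := by
            rw [ha, ← Real.rpow_natCast (2⁻¹:ℝ) k, ← Real.rpow_natCast _ k,
              ← Real.rpow_mul (by norm_num), ← Real.rpow_mul (by norm_num)]
            ring_nf
          rw [h2, h1, show ((d:ℝ) - s) = -s + (d:ℝ) by ring, Real.rpow_add ha0]
          ring
    -- done
  have hsum : ∑' k, (c * q ^ k * V) < ⊤ := by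
    have : ∑' k, (c * q ^ k * V) = c * V * ∑' k, q ^ k := by
      rw [← ENNReal.tsum_mul_left]
      congr 1; ext k; ring
    rw [this, ENNReal.tsum_geometric]
    have hqlt : q < 1 := by
      rw [hqdef]
      exact ENNReal.ofReal_lt_one.2 hq1
    have h1q : (1 - q) ≠ 0 := by
      simp only [ne_eq, tsub_eq_zero_iff_le, not_le]
      exact hqlt
    exact ENNReal.mul_lt_top (ENNReal.mul_lt_top ENNReal.ofReal_lt_top hVlt)
      (ENNReal.inv_lt_top.2 (by
        simp only [pos_iff_ne_zero]; exact h1q))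
  calc ∫⁻ z in ball (0:E) 2, f z ≤ ∫⁻ z in ({0} ∪ ⋃ k, S k), f z :=
        lintegral_mono_set hcover
    _ ≤ (∫⁻ z in ({0} : Set E), f z) + ∫⁻ z in (⋃ k, S k), f z := lintegral_union_le _ _ _
    _ ≤ 0 + ∑' k, ∫⁻ z in S k, f z := by
        gcongr
        · refine le_of_eq (setLIntegral_measure_zero _ _ ?_)
          exact measure_singleton 0
        · exact lintegral_iUnion_le _ _
    _ ≤ 0 + ∑' k, (c * q ^ k * V) := add_le_add le_rfl (ENNReal.tsum_le_tsum hbound)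
    _ < ⊤ := by
        rw [zero_add]; exact hsum

open Metric ENNReal in
theorem nu_prob {d : ℕ} (hd : 1 ≤ d) :
    IsProbabilityMeasure
      ((volume (ball (0 : EuclideanSpace ℝ (Fin d)) 1))⁻¹ •
        volume.restrict (ball (0 : EuclideanSpace ℝ (Fin d)) 1)) := by
  haveI : NeZero d := ⟨by omega⟩
  constructor
  rw [Measure.smul_apply, Measure.restrict_apply MeasurableSet.univ, Set.univ_inter,
    smul_eq_mul]
  exact ENNReal.inv_mul_cancel (measure_ball_pos _ _ one_pos).ne' measure_ball_lt_top.ne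

open Metric ENNReal in
theorem energy_lt_top {d : ℕ} (hd : 1 ≤ d) {s : ℝ} (hs : 0 < s) (hsd : s < d) :
    ∫⁻ p, (edist p.1 p.2) ^ (-s)
      ∂((((volume (ball (0 : EuclideanSpace ℝ (Fin d)) 1))⁻¹ •
          volume.restrict (ball (0 : EuclideanSpace ℝ (Fin d)) 1)).prod
        ((volume (ball (0 : EuclideanSpace ℝ (Fin d)) 1))⁻¹ •
          volume.restrict (ball (0 : EuclideanSpace ℝ (Fin d)) 1)))) < ⊤ := by
  haveI : NeZero d := ⟨by omega⟩
  set E : Type := EuclideanSpace ℝ (Fin d)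
  set B : Set E := ball (0:E) 1 with hB
  set c : ℝ≥0∞ := (volume B)⁻¹ with hc
  set ν : Measure E := c • volume.restrict B with hν
  haveI : IsProbabilityMeasure ν := nu_prob hd
  set g : E × E → ℝ≥0∞ := fun p => (edist p.1 p.2) ^ (-s) with hg
  have hgm : Measurable g := ENNReal.continuous_rpow_const.measurable.comp measurable_edist
  set K : ℝ≥0∞ := ∫⁻ z in ball (0:E) 2, (‖z‖₊ : ℝ≥0∞) ^ (-s) with hK
  have hKlt : K < ⊤ := K_lt_top hd hs hsd
  -- inner integral bound
  have hinner : ∀ x ∈ B, ∫⁻ y in B, (edist x y) ^ (-s) ≤ K := by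
    intro x hx
    set h : E → ℝ≥0∞ := (ball (0:E) 2).indicator (fun z => (‖z‖₊ : ℝ≥0∞) ^ (-s)) with hh
    have hpt : ∀ y : E, B.indicator (fun y => (edist x y) ^ (-s)) y ≤ h (y - x) := by
      intro y
      by_cases hy : y ∈ B
      · rw [Set.indicator_of_mem hy]
        have hyx : y - x ∈ ball (0:E) 2 := by
          rw [mem_ball_zero_iff]
          calc ‖y - x‖ ≤ ‖y‖ + ‖x‖ := norm_sub_le _ _
            _ < 2 := by
                have h1 := mem_ball_zero_iff.1 hy
                have h2 := mem_ball_zero_iff.1 hx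
                linarith
        rw [hh, Set.indicator_of_mem hyx]
        rw [edist_comm, edist_eq_enorm_sub, enorm_eq_nnnorm]
      · rw [Set.indicator_of_notMem hy]
        exact zero_le
    calc ∫⁻ y in B, (edist x y) ^ (-s)
        = ∫⁻ y, B.indicator (fun y => (edist x y) ^ (-s)) y := by
          rw [lintegral_indicator measurableSet_ball]
      _ ≤ ∫⁻ y, h (y - x) := lintegral_mono hpt
      _ = ∫⁻ y, h y := by
          simp_rw [sub_eq_add_neg]
          exact lintegral_add_right_eq_self h (-x)
      _ = K := by rw [hh, lintegral_indicator measurableSet_ball]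
  -- Tonelli
  rw [hg] at hgm ⊢
  rw [lintegral_prod _ hgm.aemeasurable]
  simp only [hν, lintegral_smul_measure]
  calc c * ∫⁻ x in B, c * ∫⁻ y in B, (edist x y) ^ (-s)
      ≤ c * ∫⁻ _ in B, c * K := by
        refine mul_le_mul_right (setLIntegral_mono' measurableSet_ball ?_) c
        intro x hx
        exact mul_le_mul_right (hinner x hx) c
    _ = c * (c * K * volume B) := by rw [setLIntegral_const]
    _ ≤ c * (c * K * volume B) := le_rfl
    _ < ⊤ := by
        have hc_lt : c < ⊤ := by
          rw [hc]
          exact ENNReal.inv_lt_top.2 (measure_ball_pos _ _ one_pos)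
        have hvB : volume B < ⊤ := measure_ball_lt_top
        exact ENNReal.mul_lt_top hc_lt (ENNReal.mul_lt_top (ENNReal.mul_lt_top hc_lt hKlt) hvB)

open Metric ENNReal in
/-- For the unit-volume cylinders `E_R = D_R × [0, ε_R]` with
`ε_R = (ω_{n-1} R^{n-1})⁻¹`, the `α`-Riesz energy tends to `0` as `R → ∞`,
for every `α ∈ (1, n)`. -/
theorem rieszEnergy_cylinder_tendsto_zero (n : ℕ) (hn : 2 ≤ n) (α : ℝ)
    (hα : 1 < α) (hαn : α < n) :
    Tendsto (fun R : ℝ => rieszEnergy n α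
        {x : EuclideanSpace ℝ (Fin n) |
          Real.sqrt (∑ i : Fin n, if (i : ℕ) < n - 1 then (x i) ^ 2 else 0) ≤ R ∧
          0 ≤ x ⟨n - 1, by omega⟩ ∧
          x ⟨n - 1, by omega⟩ ≤
            ((volume (Metric.ball (0 : EuclideanSpace ℝ (Fin (n - 1))) 1)).toReal *
              R ^ (n - 1))⁻¹})
      atTop (nhds 0) := by
  classical
  set d : ℕ := n - 1 with hd
  have hd1 : 1 ≤ d := by omega
  haveI : NeZero d := ⟨by omega⟩
  set E' : Type := EuclideanSpace ℝ (Fin d)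
  set s : ℝ := (n : ℝ) - α with hs
  have hs0 : 0 < s := by simp only [hs]; linarith
  have hsd : s < d := by
    have : (d : ℝ) = (n : ℝ) - 1 := by
      rw [hd, Nat.cast_sub (by omega)]; norm_num
    rw [this, hs]; linarith
  set B : Set E' := ball (0 : E') 1 with hB
  set ν : Measure E' := (volume B)⁻¹ • volume.restrict B with hν
  haveI hνprob : IsProbabilityMeasure ν := nu_prob hd1
  set I₁ : ℝ≥0∞ := ∫⁻ p, (edist p.1 p.2) ^ (-s) ∂(ν.prod ν) with hI
  have hIlt : I₁ < ⊤ := energy_lt_top hd1 hs0 hsd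
  -- key upper bound
  have key : ∀ R : ℝ, 1 ≤ R → rieszEnergy n α
      {x : EuclideanSpace ℝ (Fin n) |
          Real.sqrt (∑ i : Fin n, if (i : ℕ) < n - 1 then (x i) ^ 2 else 0) ≤ R ∧
          0 ≤ x ⟨n - 1, by omega⟩ ∧
          x ⟨n - 1, by omega⟩ ≤
            ((volume (Metric.ball (0 : EuclideanSpace ℝ (Fin (n - 1))) 1)).toReal *
              R ^ (n - 1))⁻¹} ≤ (ENNReal.ofReal R) ^ (-s) * I₁ := by
    intro R hR
    have hR0 : (0:ℝ) < R := by linarith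
    set ψ : E' → EuclideanSpace ℝ (Fin n) := fun x => phi n (R • x) with hψ
    have hψm : Measurable ψ := (phi_meas n).comp (measurable_const_smul R)
    set μR : Measure (EuclideanSpace ℝ (Fin n)) := Measure.map ψ ν with hμR
    haveI : IsProbabilityMeasure μR := Measure.isProbabilityMeasure_map hψm.aemeasurable
    set S : Set (EuclideanSpace ℝ (Fin n)) := {x : EuclideanSpace ℝ (Fin n) |
          Real.sqrt (∑ i : Fin n, if (i : ℕ) < n - 1 then (x i) ^ 2 else 0) ≤ R ∧
          0 ≤ x ⟨n - 1, by omega⟩ ∧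
          x ⟨n - 1, by omega⟩ ≤
            ((volume (Metric.ball (0 : EuclideanSpace ℝ (Fin (n - 1))) 1)).toReal *
              R ^ (n - 1))⁻¹} with hSdef
    have hf1 : Measurable (fun x : EuclideanSpace ℝ (Fin n) =>
        Real.sqrt (∑ i : Fin n, if (i : ℕ) < n - 1 then (x i) ^ 2 else 0)) := by
      apply Measurable.comp Real.continuous_sqrt.measurable
      apply Finset.measurable_sum
      intro i _
      split_ifs with h
      · exact ((measurable_pi_apply i).comp (WithLp.measurable_ofLp 2 _)).pow_const 2
      · exact measurable_const
    have hSm : MeasurableSet S := by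
      refine MeasurableSet.inter (measurableSet_le hf1 measurable_const)
        (MeasurableSet.inter ?_ ?_)
      · exact measurableSet_le measurable_const ((measurable_pi_apply _).comp (WithLp.measurable_ofLp 2 _))
      · exact measurableSet_le ((measurable_pi_apply _).comp (WithLp.measurable_ofLp 2 _)) measurable_const
    have hmem : B ⊆ ψ ⁻¹' S := by
      intro x hx
      have hxlt : ‖x‖ < 1 := mem_ball_zero_iff.1 hx
      have hnorm : ‖ψ x‖ ≤ R := by
        have h1 : ‖ψ x‖ = ‖R • x‖ := by
          have := phi_dist (by omega : 1 ≤ n) (R • x) 0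
          rw [phi_zero] at this
          simpa [dist_zero_right, hψ] using this
        rw [h1, norm_smul, Real.norm_eq_abs, abs_of_pos hR0]
        nlinarith [norm_nonneg x]
      have hlast : ψ x ⟨n - 1, by omega⟩ = 0 := by
        simp only [hψ, phi, PiLp.toLp_apply]
        exact dif_neg (lt_irrefl _)
      refine ⟨?_, ?_, ?_⟩
      · -- sqrt condition
        have hsum : (∑ i : Fin n, if (i : ℕ) < n - 1 then (ψ x i) ^ 2 else 0)
            = ∑ i : Fin n, ‖ψ x i‖ ^ 2 := by
          apply Finset.sum_congr rfl
          intro i _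
          split_ifs with h
          · rw [Real.norm_eq_abs, sq_abs]
          · have : ψ x i = 0 := by simp only [hψ, phi, PiLp.toLp_apply]; exact dif_neg h
            rw [this]; norm_num
        show Real.sqrt (∑ i : Fin n, if (i : ℕ) < n - 1 then (ψ x i) ^ 2 else 0) ≤ R
        rw [hsum, ← EuclideanSpace.norm_eq]
        exact hnorm
      · rw [hlast]
      · rw [hlast]
        have h1 : (0:ℝ) ≤ (volume (Metric.ball (0 : EuclideanSpace ℝ (Fin (n - 1))) 1)).toReal :=
          ENNReal.toReal_nonneg
        have h2 : (0:ℝ) ≤ R ^ (n-1) := by positivity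
        positivity
    have hone : μR S = 1 := by
      rw [hμR, Measure.map_apply hψm hSm]
      refine le_antisymm prob_le_one ?_
      calc (1:ℝ≥0∞) = ν B := by
            rw [hν, Measure.smul_apply, Measure.restrict_apply measurableSet_ball,
              Set.inter_self, smul_eq_mul]
            exact (ENNReal.inv_mul_cancel (measure_ball_pos _ _ one_pos).ne'
              measure_ball_lt_top.ne).symm
        _ ≤ ν (ψ ⁻¹' S) := measure_mono hmem
    -- energy computation
    have hgm : Measurable (fun p : EuclideanSpace ℝ (Fin n) × EuclideanSpace ℝ (Fin n) =>
        (edist p.1 p.2) ^ (-((n:ℝ) - α))) :=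
      ENNReal.continuous_rpow_const.measurable.comp measurable_edist
    have hcalc : (∫⁻ p, (edist p.1 p.2) ^ (-((n : ℝ) - α)) ∂(μR.prod μR))
        = (ENNReal.ofReal R) ^ (-s) * I₁ := by
      rw [hμR, Measure.map_prod_map _ _ hψm hψm, lintegral_map hgm (hψm.prodMap hψm)]
      have hpt : ∀ p : E' × E',
          (edist (ψ p.1) (ψ p.2)) ^ (-((n:ℝ) - α))
            = (ENNReal.ofReal R) ^ (-s) * (edist p.1 p.2) ^ (-s) := by
        intro p
        have h1 : edist (ψ p.1) (ψ p.2) = ENNReal.ofReal R * edist p.1 p.2 := by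
          rw [hψ]
          simp only
          rw [phi_edist (by omega : 1 ≤ n), edist_smul₀, ENNReal.smul_def, smul_eq_mul]
          congr 1
          rw [← enorm_eq_nnnorm, ← ofReal_norm, Real.norm_eq_abs, abs_of_pos hR0]
        rw [h1, ← hs, ENNReal.mul_rpow_of_ne_top ENNReal.ofReal_ne_top (edist_ne_top _ _)]
      calc ∫⁻ p, (edist (ψ (Prod.map id id p).1) (ψ p.2)) ^ (-((n:ℝ) - α)) ∂(ν.prod ν)
          = ∫⁻ p, (ENNReal.ofReal R) ^ (-s) * (edist p.1 p.2) ^ (-s) ∂(ν.prod ν) := by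
            apply lintegral_congr
            intro p
            exact hpt p
        _ = (ENNReal.ofReal R) ^ (-s) * I₁ := by
            rw [hI]
            exact lintegral_const_mul _ (ENNReal.continuous_rpow_const.measurable.comp
              measurable_edist)
    apply sInf_le
    exact ⟨μR, inferInstance, hone, hcalc.symm ▸ rfl⟩
  -- limit
  have hg : Tendsto (fun R : ℝ => (ENNReal.ofReal R) ^ (-s) * I₁) atTop (nhds 0) := by
    have h1 : Tendsto (fun R : ℝ => (ENNReal.ofReal R) ^ (-s)) atTop (nhds 0) := by
      have h2 : Tendsto (fun x : ℝ≥0∞ => x ^ (-s)) (nhds ⊤) (nhds ((⊤:ℝ≥0∞) ^ (-s))) :=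
        ENNReal.continuous_rpow_const.tendsto ⊤
      rw [ENNReal.top_rpow_of_neg (by linarith)] at h2
      exact h2.comp ENNReal.tendsto_ofReal_atTop
    have := ENNReal.Tendsto.mul_const h1 (Or.inr hIlt.ne)
    rwa [zero_mul] at this
  refine tendsto_of_tendsto_of_tendsto_of_le_of_le' tendsto_const_nhds hg ?_ ?_
  · exact Eventually.of_forall (fun R => zero_le)
  · filter_upwards [eventually_ge_atTop (1:ℝ)] with R hR
    exact key R hR
end
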